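/- arXiv:2207.07218 — 5 statements merged into one kernel-verified Lean document; each statement's English description precedes it below -/
import Mathlib

section
/- Every trilateration graph in dimension p is (p+1)-vertex-connected, provided it has at least p+2 vertices. -/
/-- A trilateration graph in dimension `p`: at least `p+1` vertices, and an ordering
(given by a permutation `v`) such that the first `p+1` vertices induce a complete
subgraph and each later vertex is adjacent to at least `p+1` earlier vertices. -/
def IsTrilateration {n : ℕ} (p : ℕ) (G : SimpleGraph (Fin n)) : Prop :=
  p + 1 ≤ n ∧ ∃ v : Fin n ≃ Fin n,
    (∀ i j : Fin n, i.val < p + 1 → j.val < p + 1 → i ≠ j → G.Adj (v i) (v j)) ∧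
    ∀ j : Fin n, p + 1 ≤ j.val →
      p + 1 ≤ {i : Fin n | i < j ∧ G.Adj (v i) (v j)}.ncard

/-- Every trilateration graph in dimension `p` with at least `p+2` vertices is
`(p+1)`-vertex-connected: it has more than `p+1` vertices and the subgraph induced
on the complement of any set of fewer than `p+1` vertices is connected. -/
theorem trilateration_vertexConnected {n p : ℕ} (G : SimpleGraph (Fin n))
    (h : IsTrilateration p G) (hn : p + 2 ≤ n) :
    p + 1 < n ∧
      ∀ K : Set (Fin n), K.ncard < p + 1 → (G.induce Kᶜ).Connected := by
  obtain ⟨hpn, v, hclique, hlate⟩ := h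
  refine ⟨by omega, ?_⟩
  intro K hK
  have hTcard : (v ⁻¹' K).ncard ≤ K.ncard := by
    have himg := Set.ncard_image_of_injective (v ⁻¹' K) v.injective
    rw [← himg]
    exact Set.ncard_le_ncard (Set.image_preimage_subset _ _) (Set.toFinite K)
  have key : ∀ S : Set (Fin n), p + 1 ≤ S.ncard → ∃ x ∈ S, v x ∉ K := by
    intro S hS
    by_contra hc
    push_neg at hc
    have hsub : S ⊆ v ⁻¹' K := fun x hx => hc x hx
    have := Set.ncard_le_ncard hsub (Set.toFinite _)
    omega
  have hS0 : p + 1 ≤ ({i : Fin n | i.val < p + 1}).ncard := by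
    have heq : {i : Fin n | i.val < p + 1} =
        Set.range (fun m : Fin (p + 1) => (⟨m.val, lt_of_lt_of_le m.isLt (by omega)⟩ : Fin n)) := by
      ext i
      constructor
      · intro hi
        exact ⟨⟨i.val, hi⟩, by ext; rfl⟩
      · rintro ⟨m, rfl⟩
        exact m.isLt
    rw [heq, ← Set.image_univ, Set.ncard_image_of_injective _ (fun a b hab => by
      apply Fin.ext
      have := congrArg Fin.val hab
      simpa using this), Set.ncard_univ]
    simp
  obtain ⟨i0, hi0, hbK⟩ := key _ hS0
  have base : ∀ i : Fin n, i.val < p + 1 → ∀ hi : v i ∉ K,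
      (G.induce Kᶜ).Reachable ⟨v i, hi⟩ ⟨v i0, hbK⟩ := by
    intro i hsm hiK
    rcases eq_or_ne i i0 with rfl | hne
    · exact SimpleGraph.Reachable.refl _
    · have hadj : (G.induce Kᶜ).Adj ⟨v i, hiK⟩ ⟨v i0, hbK⟩ := by
        simp only [SimpleGraph.comap_adj, Function.Embedding.coe_subtype]
        exact hclique i i0 hsm hi0 hne
      exact hadj.reachable
  have main : ∀ m : ℕ, ∀ i : Fin n, i.val ≤ m → ∀ hi : v i ∉ K,
      (G.induce Kᶜ).Reachable ⟨v i, hi⟩ ⟨v i0, hbK⟩ := by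
    intro m
    induction m with
    | zero =>
      intro i hi hiK
      exact base i (by omega) hiK
    | succ m ih =>
      intro i hi hiK
      by_cases hsmall : i.val < p + 1
      · exact base i hsmall hiK
      · obtain ⟨k, ⟨hki, hadj⟩, hkK⟩ := key _ (hlate i (le_of_not_gt hsmall))
        have hkval : k.val ≤ m := by
          have : k.val < i.val := hki
          omega
        have hreach := ih k hkval hkK
        have hadj' : (G.induce Kᶜ).Adj ⟨v i, hiK⟩ ⟨v k, hkK⟩ := by
          simp only [SimpleGraph.comap_adj, Function.Embedding.coe_subtype]
          exact hadj.symm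
        exact hadj'.reachable.trans hreach
  have reach_all : ∀ x : ↑Kᶜ, (G.induce Kᶜ).Reachable x ⟨v i0, hbK⟩ := by
    intro x
    have hx : v (v.symm x.1) ∉ K := by
      rw [Equiv.apply_symm_apply]
      exact x.2
    have hr := main (v.symm x.1).val (v.symm x.1) le_rfl hx
    have hxeq : x = ⟨v (v.symm x.1), hx⟩ := by
      apply Subtype.ext
      simp
    rw [hxeq]
    exact hr
  rw [SimpleGraph.connected_iff]
  refine ⟨fun x y => (reach_all x).trans (reach_all y).symm, ⟨⟨v i0, hbK⟩⟩⟩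
end

section
/- Let Omega ⊂ R^p be bounded, open, and connected, and let x_1,...,x_n ∈ Omega. Suppose there exist sets A_{j_0},...,A_{j_S} ⊆ Omega, each of diameter strictly less than r, whose union contains all the points x_1,...,x_n, such that each consecutive intersection I_s = A_{j_{s-1}} ∩ A_{j_s} contains at least p+1 of the points x_1,...,x_n, and also A_{j_0} itself contains at least p+1 points in I_1 ⊆ A_{j_0}. Then the geometric graph on x_1,...,x_n with connectivity radius r is a trilateration graph in dimension p. -/
/-- The geometric graph on points `x : Fin n → ℝ^p` with connectivity radius `r`:
an edge between `i ≠ j` iff `dist (x i) (x j) < r`. -/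
def geomGraph {n p : ℕ} (x : Fin n → EuclideanSpace ℝ (Fin p)) (r : ℝ) :
    SimpleGraph (Fin n) where
  Adj i j := i ≠ j ∧ dist (x i) (x j) < r
  symm := by
    constructor
    intro i j h
    exact ⟨h.1.symm, by rw [dist_comm]; exact h.2⟩
  loopless := by
    constructor
    intro i h
    exact h.1 rfl

/-- If points `x_1, ..., x_n` in a bounded open connected set `Ω ⊆ ℝ^p` are covered
by a chain of sets `A_0, ..., A_S ⊆ Ω`, each of diameter `< r`, where the first set
contains at least `p+1` points and each consecutive intersection contains at least
`p+1` points, then the geometric graph with connectivity radius `r` is a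
trilateration graph in dimension `p`. -/
theorem chain_cover_trilateration {n p S : ℕ} (r : ℝ)
    (Ω : Set (EuclideanSpace ℝ (Fin p)))
    (hbdd : Bornology.IsBounded Ω) (hopen : IsOpen Ω) (hconn : IsConnected Ω)
    (x : Fin n → EuclideanSpace ℝ (Fin p)) (hx : ∀ i, x i ∈ Ω)
    (A : Fin (S + 1) → Set (EuclideanSpace ℝ (Fin p)))
    (hA : ∀ s, A s ⊆ Ω)
    (hdiam : ∀ s, Metric.diam (A s) < r)
    (hcov : ∀ i, ∃ s, x i ∈ A s)
    (h0 : p + 1 ≤ {i : Fin n | x i ∈ A 0}.ncard)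
    (hI : ∀ s : Fin S,
      p + 1 ≤ {i : Fin n | x i ∈ A s.castSucc ∩ A s.succ}.ncard) :
    IsTrilateration p (geomGraph x r) := by
  classical
  have hne : ∀ i, (Finset.univ.filter (fun s : Fin (S+1) => x i ∈ A s)).Nonempty := by
    intro i; obtain ⟨s, hs⟩ := hcov i; exact ⟨s, by simp [hs]⟩
  set σ : Fin n → Fin (S+1) :=
    fun i => (Finset.univ.filter (fun s : Fin (S+1) => x i ∈ A s)).min' (hne i) with hσdef
  have hmem : ∀ i, x i ∈ A (σ i) := by
    intro i
    have := Finset.min'_mem _ (hne i)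
    simpa [hσdef] using this
  have hmin : ∀ i s, x i ∈ A s → σ i ≤ s := by
    intro i s hs
    exact Finset.min'_le _ _ (by simp [hs])
  have hadj : ∀ (s : Fin (S+1)) (i j : Fin n), i ≠ j → x i ∈ A s → x j ∈ A s →
      (geomGraph x r).Adj i j := by
    intro s i j hij hi hj
    exact ⟨hij, lt_of_le_of_lt (Metric.dist_le_diam_of_mem (hbdd.subset (hA s)) hi hj) (hdiam s)⟩
  -- n ≥ p+1
  have hn : p + 1 ≤ n := by
    calc p + 1 ≤ {i : Fin n | x i ∈ A 0}.ncard := h0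
    _ ≤ (Set.univ : Set (Fin n)).ncard := Set.ncard_le_ncard (Set.subset_univ _) (Set.toFinite _)
    _ = n := by simp [Set.ncard_univ]
  refine ⟨hn, Tuple.sort σ, ?_, ?_⟩
  · -- first p+1 vertices all have σ = 0
    have hmono := Tuple.monotone_sort σ
    set v := Tuple.sort σ with hv
    have hT : ∀ i : Fin n, i.val < p + 1 → σ (v i) = 0 := by
      intro i hi
      by_contra hne0
      -- the set T of sorted positions with σ = 0 is a lower set avoiding i
      have hsub : {t : Fin n | σ (v t) = 0} ⊆ Set.Iio i := by
        intro t ht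
        by_contra hlt
        simp only [Set.mem_Iio, not_lt] at hlt
        exact hne0 (Fin.le_zero_iff.mp (ht ▸ hmono hlt))
      have hcard : p + 1 ≤ {t : Fin n | σ (v t) = 0}.ncard := by
        have h1 : {t : Fin n | σ (v t) = 0} = ⇑v ⁻¹' {k : Fin n | σ k = 0} := rfl
        have h2 : {k : Fin n | x k ∈ A 0} ⊆ {k : Fin n | σ k = 0} := by
          intro k hk
          exact Fin.le_zero_iff.mp (hmin k 0 hk)
        calc p + 1 ≤ {k : Fin n | x k ∈ A 0}.ncard := h0
        _ ≤ {k : Fin n | σ k = 0}.ncard := Set.ncard_le_ncard h2 (Set.toFinite _)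
        _ = (⇑v ⁻¹' {k : Fin n | σ k = 0}).ncard := by
            have he : ⇑v ⁻¹' {k : Fin n | σ k = 0} = ⇑v.symm '' {k : Fin n | σ k = 0} := by
              rw [Equiv.image_eq_preimage_symm]; simp
            rw [he, Set.ncard_image_of_injective _ v.symm.injective]
        _ = {t : Fin n | σ (v t) = 0}.ncard := by rw [h1]
      have := Set.ncard_le_ncard hsub (Set.toFinite _)
      have hIio : (Set.Iio i).ncard = i.val := by
        rw [← Finset.coe_Iio, Set.ncard_coe_finset, Fin.card_Iio]
      omega
      -- contradiction: p+1 ≤ ncard T ≤ i.val < p+1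
    intro i j hi hj hij
    have h1 := hT i hi
    have h2 := hT j hj
    exact hadj 0 _ _ (fun h => hij (v.injective h)) (h1 ▸ hmem (v i)) (h2 ▸ hmem (v j))
  · intro j hj
    have hmono := Tuple.monotone_sort σ
    set v := Tuple.sort σ with hv
    rcases eq_or_ne (σ (v j)) 0 with hm0 | hm0
    · -- all earlier vertices are in A 0
      have hsub : Set.Iio j ⊆ {i : Fin n | i < j ∧ (geomGraph x r).Adj (v i) (v j)} := by
        intro i hi
        have hle : σ (v i) ≤ σ (v j) := hmono (le_of_lt hi)
        have hi0 : σ (v i) = 0 := Fin.le_zero_iff.mp (hm0 ▸ hle)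
        refine ⟨hi, hadj 0 _ _ (fun h => (ne_of_lt hi) (v.injective h))
          (hi0 ▸ hmem (v i)) (hm0 ▸ hmem (v j))⟩
      have hIio : (Set.Iio j).ncard = j.val := by
        rw [← Finset.coe_Iio, Set.ncard_coe_finset, Fin.card_Iio]
      calc p + 1 ≤ j.val := hj
      _ = (Set.Iio j).ncard := hIio.symm
      _ ≤ _ := Set.ncard_le_ncard hsub (Set.toFinite _)
    · -- σ (v j) = s.succ for some s : Fin S
      set m := σ (v j) with hm
      set s : Fin S := m.pred hm0 with hs
      have hsucc : s.succ = m := Fin.succ_pred _ _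
      have key : ∀ k : Fin n, x k ∈ A s.castSucc ∩ A s.succ →
          v.symm k < j ∧ (geomGraph x r).Adj k (v j) := by
        intro k hk
        have hklt : σ k < m := by
          calc σ k ≤ s.castSucc := hmin k _ hk.1
          _ < s.succ := Fin.castSucc_lt_succ
          _ = m := hsucc
        have hlt : v.symm k < j := by
          by_contra hge
          push_neg at hge
          have : σ (v j) ≤ σ (v (v.symm k)) := hmono hge
          rw [Equiv.apply_symm_apply] at this
          exact absurd this (not_le.mpr hklt)
        refine ⟨hlt, hadj s.succ _ _ ?_ hk.2 (hsucc ▸ hm ▸ hmem (v j))⟩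
        intro h
        rw [h] at hklt
        exact lt_irrefl _ hklt
      have hsub : ⇑v.symm '' {k : Fin n | x k ∈ A s.castSucc ∩ A s.succ} ⊆
          {i : Fin n | i < j ∧ (geomGraph x r).Adj (v i) (v j)} := by
        rintro i ⟨k, hk, rfl⟩
        obtain ⟨h1, h2⟩ := key k hk
        refine ⟨h1, ?_⟩
        rwa [Equiv.apply_symm_apply]
      calc p + 1 ≤ {k : Fin n | x k ∈ A s.castSucc ∩ A s.succ}.ncard := hI s
      _ = (⇑v.symm '' {k : Fin n | x k ∈ A s.castSucc ∩ A s.succ}).ncard :=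
          (Set.ncard_image_of_injective _ v.symm.injective).symm
      _ ≤ _ := Set.ncard_le_ncard hsub (Set.toFinite _)
end

section
/- Let a configuration of n points be drawn i.i.d. from a density supported on the closure of a bounded, open, connected set Omega ⊂ R^p. Then there exists a sequence r_n -> 0 such that the geometric graph on the configuration with any connectivity radius r >= r_n is a trilateration graph in dimension p with probability tending to one as n -> infinity. -/
open MeasureTheory Filter
open scoped ENNReal

theorem tril_mono {n p : ℕ} {x : Fin n → EuclideanSpace ℝ (Fin p)} {r s : ℝ}
    (hrs : r ≤ s) (h : IsTrilateration p (geomGraph x r)) :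
    IsTrilateration p (geomGraph x s) := by
  obtain ⟨hn, v, h1, h2⟩ := h
  refine ⟨hn, v, fun i j hi hj hij => ?_, fun j hj => ?_⟩
  · obtain ⟨hne, hd⟩ := h1 i j hi hj hij
    exact ⟨hne, hd.trans_le hrs⟩
  · refine le_trans (h2 j hj) (Set.ncard_le_ncard ?_ (Set.toFinite _))
    rintro i ⟨hij, hne, hd⟩
    exact ⟨hij, hne, hd.trans_le hrs⟩

theorem det_tril {n p m : ℕ} {r : ℝ} (hr : 0 < r)
    (z : Fin m → EuclideanSpace ℝ (Fin p)) (k₀ : Fin m) (ρ : Fin m → ℕ)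
    (hρk₀ : ρ k₀ = 0)
    (hρ0 : ∀ k, ρ k = 0 → dist (z k) (z k₀) < r / 4)
    (hρs : ∀ k, 0 < ρ k → ∃ l, ρ l < ρ k ∧ dist (z l) (z k) < r / 4)
    (x : Fin n → EuclideanSpace ℝ (Fin p))
    (hcov : ∀ i, ∃ k, dist (x i) (z k) < r / 8)
    (hcount : ∀ k : Fin m, p + 1 ≤ {i : Fin n | dist (x i) (z k) < r / 8}.ncard)
    (hn : p + 1 ≤ n) :
    IsTrilateration p (geomGraph x r) := by
  classical
  set key : Fin n → ℕ := fun i => sInf {d | ∃ k, dist (x i) (z k) < r / 8 ∧ ρ k = d} with hkey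
  have key_spec : ∀ i, ∃ k, dist (x i) (z k) < r / 8 ∧ ρ k = key i := by
    intro i
    obtain ⟨k, hk⟩ := hcov i
    have hne : {d | ∃ k, dist (x i) (z k) < r / 8 ∧ ρ k = d}.Nonempty := ⟨ρ k, k, hk, rfl⟩
    exact Nat.sInf_mem hne
  have key_le : ∀ i k, dist (x i) (z k) < r / 8 → key i ≤ ρ k := by
    intro i k h
    exact Nat.sInf_le ⟨k, h, rfl⟩
  have key0 : ∀ i, key i = 0 → dist (x i) (z k₀) < 3 * r / 8 := by
    intro i hi
    obtain ⟨k, hk, hρ⟩ := key_spec i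
    rw [hi] at hρ
    calc dist (x i) (z k₀) ≤ dist (x i) (z k) + dist (z k) (z k₀) := dist_triangle _ _ _
      _ < r / 8 + r / 4 := add_lt_add hk (hρ0 k hρ)
      _ = 3 * r / 8 := by ring
  set σ : Equiv.Perm (Fin n) := Tuple.sort key with hσ
  have hmono : Monotone (key ∘ σ) := Tuple.monotone_sort key
  -- many points have key 0
  have hcard0 : p + 1 ≤ {i : Fin n | key i = 0}.ncard := by
    refine le_trans (hcount k₀) (Set.ncard_le_ncard ?_ (Set.toFinite _))
    intro i hi
    have := key_le i k₀ hi
    rw [hρk₀] at this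
    exact Nat.le_zero.mp this
  -- initial segment is key 0
  have sorted0 : ∀ t : Fin n, t.val < p + 1 → key (σ t) = 0 := by
    intro t ht
    by_contra hkt
    have hsub : {i : Fin n | key i = 0} ⊆ σ '' {j : Fin n | j < t} := by
      intro i hi
      refine ⟨σ.symm i, ?_, by simp⟩
      simp only [Set.mem_setOf_eq]
      by_contra hlt
      rw [not_lt] at hlt
      have := hmono hlt
      simp only [Function.comp_apply, Equiv.apply_symm_apply] at this
      rw [Set.mem_setOf_eq.mp hi] at this
      exact hkt (Nat.le_zero.mp this)
    have h1 : {i : Fin n | key i = 0}.ncard ≤ {j : Fin n | j < t}.ncard := by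
      calc {i : Fin n | key i = 0}.ncard ≤ (σ '' {j : Fin n | j < t}).ncard :=
            Set.ncard_le_ncard hsub (Set.toFinite _)
        _ = {j : Fin n | j < t}.ncard := Set.ncard_image_of_injective _ σ.injective
    have h2 : {j : Fin n | j < t}.ncard = t.val := by
      have : {j : Fin n | j < t} = ↑(Finset.Iio t) := by
        ext j; simp
      rw [this, Set.ncard_coe_finset, Fin.card_Iio]
    omega
  refine ⟨hn, σ, ?_, ?_⟩
  · -- clique
    intro i j hi hj hij
    refine ⟨fun h => hij (σ.injective h), ?_⟩
    have hdi := key0 _ (sorted0 i hi)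
    have hdj := key0 _ (sorted0 j hj)
    calc dist (x (σ i)) (x (σ j)) ≤ dist (x (σ i)) (z k₀) + dist (z k₀) (x (σ j)) :=
          dist_triangle _ _ _
      _ = dist (x (σ i)) (z k₀) + dist (x (σ j)) (z k₀) := by rw [dist_comm (z k₀)]
      _ < 3 * r / 8 + 3 * r / 8 := add_lt_add hdi hdj
      _ < r := by linarith
  · -- later vertices
    intro t ht
    by_cases h0 : key (σ t) = 0
    · -- all earlier first p+1 positions work
      have hsub : {j : Fin n | j.val < p + 1} ⊆
          {i : Fin n | i < t ∧ (geomGraph x r).Adj (σ i) (σ t)} := by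
        intro j hj
        have hj : j.val < p + 1 := hj
        have hjt : j < t := by
          have : j.val < t.val := lt_of_lt_of_le hj ht
          exact this
        refine ⟨hjt, fun h => absurd (σ.injective h) (ne_of_lt hjt), ?_⟩
        have hdj := key0 _ (sorted0 j hj)
        have hdt := key0 _ h0
        calc dist (x (σ j)) (x (σ t)) ≤ dist (x (σ j)) (z k₀) + dist (z k₀) (x (σ t)) :=
              dist_triangle _ _ _
          _ = dist (x (σ j)) (z k₀) + dist (x (σ t)) (z k₀) := by rw [dist_comm (z k₀)]
          _ < 3 * r / 8 + 3 * r / 8 := add_lt_add hdj hdt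
          _ < r := by linarith
      calc p + 1 = {j : Fin n | j.val < p + 1}.ncard := by
            have : {j : Fin n | j.val < p + 1} = ↑(Finset.Iio (⟨p + 1, by omega⟩ : Fin n)) := by
              ext j
              simp [Fin.lt_def]
            rw [this, Set.ncard_coe_finset, Fin.card_Iio]
        _ ≤ _ := Set.ncard_le_ncard hsub (Set.toFinite _)
    · -- positive key: use parent cell
      obtain ⟨c, hc, hρc⟩ := key_spec (σ t)
      have hpos : 0 < ρ c := by rw [hρc]; exact Nat.pos_of_ne_zero h0
      obtain ⟨l, hl, hdl⟩ := hρs c hpos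
      have hsub : σ.symm '' {i : Fin n | dist (x i) (z l) < r / 8} ⊆
          {i : Fin n | i < t ∧ (geomGraph x r).Adj (σ i) (σ t)} := by
        rintro i ⟨i', hi', rfl⟩
        have hi' : dist (x i') (z l) < r / 8 := hi'
        have hkey' : key i' < key (σ t) := by
          rw [← hρc]
          exact lt_of_le_of_lt (key_le i' l hi') hl
        have hlt : σ.symm i' < t := by
          by_contra hge
          push_neg at hge
          have := hmono hge
          simp only [Function.comp_apply, Equiv.apply_symm_apply] at this
          omega
        simp only [Set.mem_setOf_eq]
        refine ⟨hlt, ?_, ?_⟩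
        · intro h
          simp only [Equiv.apply_symm_apply] at h
          rw [h] at hkey'
          omega
        · simp only [Equiv.apply_symm_apply]
          calc dist (x i') (x (σ t)) ≤ dist (x i') (z l) + dist (z l) (x (σ t)) :=
                dist_triangle _ _ _
            _ ≤ dist (x i') (z l) + (dist (z l) (z c) + dist (z c) (x (σ t))) := by
                have := dist_triangle (z l) (z c) (x (σ t))
                linarith
            _ = dist (x i') (z l) + dist (z l) (z c) + dist (x (σ t)) (z c) := by
                rw [dist_comm (z c) (x (σ t))]; ring
            _ < r / 8 + r / 4 + r / 8 := by
                have := hi'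
                exact add_lt_add (add_lt_add hi' hdl) hc
            _ < r := by linarith
      calc p + 1 ≤ {i : Fin n | dist (x i) (z l) < r / 8}.ncard := hcount l
        _ = (σ.symm '' {i : Fin n | dist (x i) (z l) < r / 8}).ncard :=
            (Set.ncard_image_of_injective _ σ.symm.injective).symm
        _ ≤ _ := Set.ncard_le_ncard hsub (Set.toFinite _)

theorem last_step {V : Type*} {G : SimpleGraph V} {a b : V} (w : G.Walk a b) (hne : a ≠ b) :
    ∃ l, G.Adj a l ∧ G.dist b l + 1 ≤ w.length := by
  cases w with
  | nil => exact absurd rfl hne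
  | cons hadj q =>
      refine ⟨_, hadj, ?_⟩
      have h1 := SimpleGraph.dist_le q.reverse
      rw [SimpleGraph.Walk.length_reverse] at h1
      simp only [SimpleGraph.Walk.length_cons]
      omega

theorem geom_net {p : ℕ} (Ω : Set (EuclideanSpace ℝ (Fin p)))
    (hbdd : Bornology.IsBounded Ω) (hconn : IsConnected Ω)
    {r : ℝ} (hr : 0 < r) :
    ∃ (m : ℕ) (z : Fin m → EuclideanSpace ℝ (Fin p)) (k₀ : Fin m) (ρ : Fin m → ℕ),
      (∀ k, z k ∈ Ω) ∧ ρ k₀ = 0 ∧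
      (∀ k, ρ k = 0 → dist (z k) (z k₀) < r / 4) ∧
      (∀ k, 0 < ρ k → ∃ l, ρ l < ρ k ∧ dist (z l) (z k) < r / 4) ∧
      (∀ w ∈ closure Ω, ∃ k, dist w (z k) < r / 8) := by
  classical
  have hr8 : 0 < r / 8 := by linarith
  have hK : IsCompact (closure Ω) := hbdd.isCompact_closure
  have hcov : closure Ω ⊆ ⋃ w : Ω, Metric.ball (w : EuclideanSpace ℝ (Fin p)) (r / 8) := by
    intro w hw
    obtain ⟨v, hvΩ, hdist⟩ := Metric.mem_closure_iff.mp hw (r / 8) hr8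
    exact Set.mem_iUnion.2 ⟨⟨v, hvΩ⟩, Metric.mem_ball.2 hdist⟩
  obtain ⟨t, ht⟩ := hK.elim_finite_subcover _ (fun _ => Metric.isOpen_ball) hcov
  set m := t.card with hm
  set e : Fin m ≃ {v // v ∈ t} := t.equivFin.symm with he
  set z : Fin m → EuclideanSpace ℝ (Fin p) := fun k => ((e k : Ω) : EuclideanSpace ℝ (Fin p))
    with hz
  have hzΩ : ∀ k, z k ∈ Ω := fun k => (e k : Ω).2
  have cover' : ∀ w ∈ closure Ω, ∃ k, dist w (z k) < r / 8 := by
    intro w hw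
    have := ht hw
    rw [Set.mem_iUnion₂] at this
    obtain ⟨v, hvt, hball⟩ := this
    refine ⟨e.symm ⟨v, hvt⟩, ?_⟩
    have : z (e.symm ⟨v, hvt⟩) = (v : EuclideanSpace ℝ (Fin p)) := by
      simp [hz]
    rw [this]
    exact Metric.mem_ball.mp hball
  obtain ⟨w₀, hw₀⟩ := hconn.nonempty
  obtain ⟨k₀, -⟩ := cover' w₀ (subset_closure hw₀)
  set H : SimpleGraph (Fin m) :=
    { Adj := fun k l => k ≠ l ∧ dist (z k) (z l) < r / 4
      symm := by
        constructor
        intro k l hkl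
        exact ⟨hkl.1.symm, by rw [dist_comm]; exact hkl.2⟩
      loopless := ⟨fun k hk => hk.1 rfl⟩ } with hH
  have hreach : ∀ k, H.Reachable k₀ k := by
    intro k
    by_contra hk
    set U := ⋃ l ∈ {l | H.Reachable k₀ l}, Metric.ball (z l) (r / 8) with hU
    set V := ⋃ l ∈ {l | ¬H.Reachable k₀ l}, Metric.ball (z l) (r / 8) with hV
    have hUopen : IsOpen U := isOpen_biUnion fun _ _ => Metric.isOpen_ball
    have hVopen : IsOpen V := isOpen_biUnion fun _ _ => Metric.isOpen_ball
    have hsub : Ω ⊆ U ∪ V := by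
      intro w hw
      obtain ⟨k', hk'⟩ := cover' w (subset_closure hw)
      by_cases hre : H.Reachable k₀ k'
      · exact Or.inl (Set.mem_biUnion hre (Metric.mem_ball.2 hk'))
      · exact Or.inr (Set.mem_biUnion hre (Metric.mem_ball.2 hk'))
    have hUne : (Ω ∩ U).Nonempty :=
      ⟨z k₀, hzΩ k₀, Set.mem_biUnion (SimpleGraph.Reachable.refl k₀)
        (Metric.mem_ball_self hr8)⟩
    have hVne : (Ω ∩ V).Nonempty :=
      ⟨z k, hzΩ k, Set.mem_biUnion hk (Metric.mem_ball_self hr8)⟩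
    obtain ⟨w, hwΩ, hwU, hwV⟩ := hconn.isPreconnected U V hUopen hVopen hsub hUne hVne
    rw [hU, Set.mem_iUnion₂] at hwU
    rw [hV, Set.mem_iUnion₂] at hwV
    obtain ⟨l, hl, hwl⟩ := hwU
    obtain ⟨l', hl', hwl'⟩ := hwV
    have hne : l ≠ l' := fun h => hl' (h ▸ hl)
    have hdist : dist (z l) (z l') < r / 4 := by
      have h1 := Metric.mem_ball.mp hwl
      have h2 := Metric.mem_ball.mp hwl'
      calc dist (z l) (z l') ≤ dist (z l) w + dist w (z l') := dist_triangle _ _ _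
        _ = dist w (z l) + dist w (z l') := by rw [dist_comm]
        _ < r / 8 + r / 8 := add_lt_add h1 h2
        _ = r / 4 := by ring
    exact hl' (hl.trans (SimpleGraph.Adj.reachable ⟨hne, hdist⟩))
  refine ⟨m, z, k₀, fun k => H.dist k₀ k, hzΩ, SimpleGraph.dist_self, ?_, ?_, cover'⟩
  · intro k hk
    have : k₀ = k := ((hreach k).dist_eq_zero_iff).mp hk
    rw [← this]
    simpa using by positivity
  · intro k hk
    have hne : k ≠ k₀ := by
      intro h
      rw [h] at hk
      simp [SimpleGraph.dist_self] at hk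
    obtain ⟨w, hwlen⟩ := (hreach k).exists_walk_length_eq_dist
    obtain ⟨l, hadj, hdl⟩ := last_step w.reverse hne
    rw [SimpleGraph.Walk.length_reverse, hwlen] at hdl
    refine ⟨l, ?_, by rw [dist_comm]; exact hadj.2⟩
    show H.dist k₀ l < H.dist k₀ k
    omega


section
variable {p : ℕ}
local notation "E" => EuclideanSpace ℝ (Fin p)

-- cylinder set measure computations
theorem pi_single_coord_zero {n : ℕ} (P : Measure E) [IsProbabilityMeasure P]
    (C : Set E) (hC : P C = 0) (i : Fin n) :
    (Measure.pi fun _ : Fin n => P) {x : Fin n → E | x i ∈ C} = 0 := by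
  classical
  have hset : {x : Fin n → E | x i ∈ C} ⊆
      Set.pi Set.univ (fun j => if j = i then C else Set.univ) := by
    intro x hx
    intro j _
    by_cases h : j = i
    · subst h; simpa [if_pos rfl] using hx
    · simp [if_neg h]
  refine le_antisymm ?_ zero_le
  calc (Measure.pi fun _ : Fin n => P) {x : Fin n → E | x i ∈ C}
      ≤ (Measure.pi fun _ : Fin n => P)
        (Set.pi Set.univ (fun j => if j = i then C else Set.univ)) := measure_mono hset
    _ = ∏ j : Fin n, P (if j = i then C else Set.univ) := Measure.pi_pi _ _
    _ = 0 := Finset.prod_eq_zero (Finset.mem_univ i) (by simp [hC])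

theorem pi_block_empty {n : ℕ} (P : Measure E) [IsProbabilityMeasure P]
    (A : Set E) (B : Set (Fin n)) [DecidablePred (· ∈ B)] :
    (Measure.pi fun _ : Fin n => P) {x : Fin n → E | ∀ i ∈ B, x i ∉ A} ≤
      P Aᶜ ^ (Finset.univ.filter (· ∈ B)).card := by
  classical
  have hset : {x : Fin n → E | ∀ i ∈ B, x i ∉ A} =
      Set.pi Set.univ (fun j => if j ∈ B then Aᶜ else Set.univ) := by
    ext x
    simp only [Set.mem_setOf_eq, Set.mem_pi, Set.mem_univ, forall_true_left]
    constructor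
    · intro h j
      by_cases hj : j ∈ B
      · simp only [if_pos hj]; exact h j hj
      · simp [if_neg hj]
    · intro h j hj
      have := h j
      rw [if_pos hj] at this
      exact this
  rw [hset, Measure.pi_pi]
  have : ∀ i : Fin n, P (if i ∈ B then Aᶜ else Set.univ) =
      if i ∈ B then P Aᶜ else P Set.univ := by
    intro i; split_ifs <;> rfl
  rw [Finset.prod_congr rfl fun i _ => this i,
    Finset.prod_ite (fun _ => P Aᶜ) (fun _ => P Set.univ)]
  simp only [Finset.prod_const, measure_univ, one_pow, mul_one]
  exact le_rfl

end

theorem prob_fixed {p : ℕ} (Ω : Set (EuclideanSpace ℝ (Fin p)))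
    (hbdd : Bornology.IsBounded Ω) (hopen : IsOpen Ω) (hconn : IsConnected Ω)
    (P : Measure (EuclideanSpace ℝ (Fin p))) [IsProbabilityMeasure P]
    (hsupp : P ((closure Ω)ᶜ) = 0)
    (hpos : ∀ A : Set (EuclideanSpace ℝ (Fin p)),
      A ⊆ Ω → IsOpen A → A.Nonempty → 0 < P A)
    {t : ℝ} (ht : 0 < t) :
    Tendsto (fun n => (Measure.pi fun _ : Fin n => P)
      {x : Fin n → EuclideanSpace ℝ (Fin p) |
        ∀ s : ℝ, t ≤ s → IsTrilateration p (geomGraph x s)}) atTop (nhds 1) := by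
  classical
  obtain ⟨m, z, k₀, ρ, hzΩ, hρk₀, hρ0, hρs, hcov⟩ := geom_net Ω hbdd hconn ht
  set A : Fin m → Set (EuclideanSpace ℝ (Fin p)) :=
    fun k => Metric.ball (z k) (t / 8) ∩ Ω with hA
  have hAopen : ∀ k, IsOpen (A k) := fun k => Metric.isOpen_ball.inter hopen
  have hApos : ∀ k, 0 < P (A k) := fun k =>
    hpos _ Set.inter_subset_right (hAopen k)
      ⟨z k, Metric.mem_ball_self (by linarith), hzΩ k⟩
  set e : Fin m → ℝ≥0∞ := fun k => P ((A k)ᶜ) with he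
  have he1 : ∀ k, e k < 1 := by
    intro k
    have h1 : e k = 1 - P (A k) := prob_compl_eq_one_sub (hAopen k).measurableSet
    rw [h1]
    exact ENNReal.sub_lt_self ENNReal.one_ne_top one_ne_zero (hApos k).ne'
  set β : ℕ → ℝ≥0∞ := fun n => ∑ k : Fin m, (p + 1 : ℝ≥0∞) * e k ^ (n / (p + 1)) with hβdef
  have hdiv : Tendsto (fun n : ℕ => n / (p + 1)) atTop atTop := by
    refine tendsto_atTop_atTop.2 fun B => ⟨B * (p + 1), fun n hn => ?_⟩
    exact (Nat.le_div_iff_mul_le (Nat.succ_pos p)).2 hn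
  have hβ : Tendsto β atTop (nhds 0) := by
    have hterm : ∀ k : Fin m,
        Tendsto (fun n : ℕ => (p + 1 : ℝ≥0∞) * e k ^ (n / (p + 1))) atTop (nhds 0) := by
      intro k
      have h1 := (ENNReal.tendsto_pow_atTop_nhds_zero_of_lt_one (he1 k)).comp hdiv
      have h2 := ENNReal.Tendsto.const_mul h1 (Or.inr (by simp : (p + 1 : ℝ≥0∞) ≠ ⊤))
      simpa using h2
    have := tendsto_finset_sum (Finset.univ : Finset (Fin m)) (fun k _ => hterm k)
    simpa using this
  have key : ∀ n : ℕ, p + 1 ≤ n →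
      (Measure.pi fun _ : Fin n => P)
        {x : Fin n → EuclideanSpace ℝ (Fin p) |
          ∀ s : ℝ, t ≤ s → IsTrilateration p (geomGraph x s)}ᶜ ≤ β n := by
    intro n hn
    set μn := (Measure.pi fun _ : Fin n => P) with hμn
    set q := n / (p + 1) with hq
    have hq1 : 1 ≤ q := (Nat.one_le_div_iff (Nat.succ_pos p)).2 hn
    set Block : Fin (p + 1) → Set (Fin n) :=
      fun b => {i : Fin n | b.val * q ≤ i.val ∧ i.val < b.val * q + q} with hBlock
    have hsub : {x : Fin n → EuclideanSpace ℝ (Fin p) |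
          ∀ s : ℝ, t ≤ s → IsTrilateration p (geomGraph x s)}ᶜ ⊆
        (⋃ i : Fin n, {x : Fin n → EuclideanSpace ℝ (Fin p) | x i ∈ (closure Ω)ᶜ}) ∪
        ⋃ k : Fin m, ⋃ b : Fin (p + 1),
          {x : Fin n → EuclideanSpace ℝ (Fin p) | ∀ i ∈ Block b, x i ∉ A k} := by
      intro x hx
      by_contra hmem
      rw [Set.mem_union, not_or] at hmem
      obtain ⟨h1, h2⟩ := hmem
      simp only [Set.mem_iUnion, not_exists, Set.mem_setOf_eq, Set.mem_compl_iff,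
        not_not] at h1
      simp only [Set.mem_iUnion, not_exists, Set.mem_setOf_eq, not_forall, not_not] at h2
      apply hx
      intro s hs
      refine tril_mono hs (det_tril ht z k₀ ρ hρk₀ hρ0 hρs x
        (fun i => hcov (x i) (h1 i)) ?_ hn)
      intro k
      have h2k : ∀ b : Fin (p + 1), ∃ i, i ∈ Block b ∧ x i ∈ A k := by
        intro b
        obtain ⟨i, hi1, hi2⟩ := h2 k b
        exact ⟨i, hi1, hi2⟩
      choose f hfB hfA using h2k
      have hfinj : Function.Injective f := by
        have hkey : ∀ b b' : Fin (p + 1), b.val < b'.val → f b ≠ f b' := by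
          intro b b' hlt heq
          have hb1 := (hfB b).2
          have hb2 := (hfB b').1
          rw [heq] at hb1
          have hmul : b.val * q + q ≤ b'.val * q := by
            have := Nat.mul_le_mul_right q (Nat.succ_le_of_lt hlt)
            simpa [Nat.succ_mul] using this
          omega
        intro b b' heq
        rcases Nat.lt_trichotomy b.val b'.val with h | h | h
        · exact absurd heq (hkey b b' h)
        · exact Fin.ext h
        · exact absurd heq.symm (hkey b' b h)
      have himg : ↑(Finset.univ.image f) ⊆
          {i : Fin n | dist (x i) (z k) < t / 8} := by
        intro i hi
        simp only [Finset.coe_image, Finset.coe_univ, Set.image_univ,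
          Set.mem_range] at hi
        obtain ⟨b, rfl⟩ := hi
        exact Metric.mem_ball.mp (hfA b).1
      calc p + 1 = (Finset.univ.image f).card := by
            rw [Finset.card_image_of_injective _ hfinj, Finset.card_univ,
              Fintype.card_fin]
        _ = (↑(Finset.univ.image f) : Set (Fin n)).ncard :=
            (Set.ncard_coe_finset _).symm
        _ ≤ _ := Set.ncard_le_ncard himg (Set.toFinite _)
    have hcardq : ∀ b : Fin (p + 1),
        q ≤ (Finset.univ.filter (· ∈ Block b)).card := by
      intro b
      have hbound : ∀ j : Fin q, b.val * q + j.val < n := by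
        intro j
        have h1 : b.val * q + j.val < b.val * q + q := by omega
        have h2 : b.val * q + q ≤ (p + 1) * q := by
          have : b.val + 1 ≤ p + 1 := b.isLt
          calc b.val * q + q = (b.val + 1) * q := by ring
            _ ≤ (p + 1) * q := Nat.mul_le_mul_right q this
        have h3 : (p + 1) * q ≤ n := by
          rw [hq, Nat.mul_comm]
          exact Nat.div_mul_le_self n (p + 1)
        omega
      have := Finset.card_le_card_of_injOn
        (f := fun j : Fin q => (⟨b.val * q + j.val, hbound j⟩ : Fin n))
        (s := Finset.univ) (t := Finset.univ.filter (· ∈ Block b))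
        (fun j _ => by
          simp only [Finset.mem_coe, Finset.mem_filter, Finset.mem_univ, true_and]
          refine ⟨?_, ?_⟩
          · show b.val * q ≤ b.val * q + j.val
            omega
          · show b.val * q + j.val < b.val * q + q
            omega)
        (fun j _ j' _ hjj => by
          have h : b.val * q + j.val = b.val * q + j'.val := congrArg Fin.val hjj
          exact Fin.ext (by omega : j.val = j'.val))
      simpa using this
    have hm1 : μn (⋃ i : Fin n,
        {x : Fin n → EuclideanSpace ℝ (Fin p) | x i ∈ (closure Ω)ᶜ}) = 0 := by
      refine le_antisymm (le_trans (measure_iUnion_le _) ?_) zero_le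
      have : ∀ i : Fin n, μn {x : Fin n → EuclideanSpace ℝ (Fin p) |
          x i ∈ (closure Ω)ᶜ} = 0 :=
        fun i => pi_single_coord_zero P _ hsupp i
      rw [tsum_congr this]
      simp
    have hm2 : μn (⋃ k : Fin m, ⋃ b : Fin (p + 1),
        {x : Fin n → EuclideanSpace ℝ (Fin p) | ∀ i ∈ Block b, x i ∉ A k}) ≤ β n := by
      calc μn _ ≤ ∑' k : Fin m, μn (⋃ b : Fin (p + 1),
            {x : Fin n → EuclideanSpace ℝ (Fin p) | ∀ i ∈ Block b, x i ∉ A k}) :=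
            measure_iUnion_le _
        _ ≤ ∑' k : Fin m, ∑' b : Fin (p + 1), μn
            {x : Fin n → EuclideanSpace ℝ (Fin p) | ∀ i ∈ Block b, x i ∉ A k} :=
            ENNReal.tsum_le_tsum fun k => measure_iUnion_le _
        _ ≤ ∑' k : Fin m, ∑' _b : Fin (p + 1), e k ^ q := by
            refine ENNReal.tsum_le_tsum fun k => ENNReal.tsum_le_tsum fun b => ?_
            calc μn {x : Fin n → EuclideanSpace ℝ (Fin p) | ∀ i ∈ Block b, x i ∉ A k}
                ≤ P ((A k)ᶜ) ^ (Finset.univ.filter (· ∈ Block b)).card :=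
                  pi_block_empty P (A k) (Block b)
              _ ≤ e k ^ q := pow_le_pow_right_of_le_one' (he1 k).le (hcardq b)
        _ = β n := by
            rw [tsum_fintype]
            refine Finset.sum_congr rfl fun k _ => ?_
            rw [tsum_fintype]
            simp [Finset.sum_const, nsmul_eq_mul, hq]
    calc μn _ ≤ μn ((⋃ i : Fin n,
          {x : Fin n → EuclideanSpace ℝ (Fin p) | x i ∈ (closure Ω)ᶜ}) ∪
          ⋃ k : Fin m, ⋃ b : Fin (p + 1),
            {x : Fin n → EuclideanSpace ℝ (Fin p) | ∀ i ∈ Block b, x i ∉ A k}) :=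
          measure_mono hsub
      _ ≤ μn (⋃ i : Fin n,
            {x : Fin n → EuclideanSpace ℝ (Fin p) | x i ∈ (closure Ω)ᶜ}) +
          μn (⋃ k : Fin m, ⋃ b : Fin (p + 1),
            {x : Fin n → EuclideanSpace ℝ (Fin p) | ∀ i ∈ Block b, x i ∉ A k}) :=
          measure_union_le _ _
      _ ≤ β n := by rw [hm1, zero_add]; exact hm2
  rw [ENNReal.tendsto_nhds ENNReal.one_ne_top]
  intro ε hε
  filter_upwards [hβ.eventually_lt_const hε, eventually_ge_atTop (p + 1)] with n hβn hn
  constructor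
  · have hc : (Measure.pi fun _ : Fin n => P)
        {x : Fin n → EuclideanSpace ℝ (Fin p) |
          ∀ s : ℝ, t ≤ s → IsTrilateration p (geomGraph x s)}ᶜ ≤ ε :=
      le_of_lt (lt_of_le_of_lt (key n hn) hβn)
    refine tsub_le_iff_right.2 ?_
    calc (1 : ℝ≥0∞) = (Measure.pi fun _ : Fin n => P) Set.univ := measure_univ.symm
      _ = (Measure.pi fun _ : Fin n => P)
          ({x : Fin n → EuclideanSpace ℝ (Fin p) |
            ∀ s : ℝ, t ≤ s → IsTrilateration p (geomGraph x s)} ∪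
           {x : Fin n → EuclideanSpace ℝ (Fin p) |
            ∀ s : ℝ, t ≤ s → IsTrilateration p (geomGraph x s)}ᶜ) := by
          rw [Set.union_compl_self]
      _ ≤ _ + _ := measure_union_le _ _
      _ ≤ _ + ε := add_le_add_right hc _
  · exact le_trans prob_le_one le_self_add

/-- Theorem 1: if a configuration of `n` points is drawn i.i.d. from a density
supported on the closure of a bounded, open, connected set `Ω ⊆ ℝ^p`, then there is
a sequence `r_n → 0` such that, with probability tending to one as `n → ∞`, the
geometric graph on the configuration with any connectivity radius `r ≥ r_n` is a
trilateration graph in dimension `p`. -/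
theorem rgg_trilateration {p : ℕ} (Ω : Set (EuclideanSpace ℝ (Fin p)))
    (hbdd : Bornology.IsBounded Ω) (hopen : IsOpen Ω) (hconn : IsConnected Ω)
    (P : Measure (EuclideanSpace ℝ (Fin p))) [IsProbabilityMeasure P]
    (hac : P ≪ volume)
    (hsupp : P ((closure Ω)ᶜ) = 0)
    (hpos : ∀ A : Set (EuclideanSpace ℝ (Fin p)),
      A ⊆ Ω → IsOpen A → A.Nonempty → 0 < P A) :
    ∃ r : ℕ → ℝ, Tendsto r atTop (nhds 0) ∧
      Tendsto
        (fun n => (Measure.pi fun _ : Fin n => P)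
          {x : Fin n → EuclideanSpace ℝ (Fin p) |
            ∀ s : ℝ, r n ≤ s → IsTrilateration p (geomGraph x s)})
        atTop (nhds 1) := by
  classical
  have F : ∀ k : ℕ, Tendsto (fun n => (Measure.pi fun _ : Fin n => P)
      {x : Fin n → EuclideanSpace ℝ (Fin p) |
        ∀ s : ℝ, 1 / ((k : ℝ) + 1) ≤ s → IsTrilateration p (geomGraph x s)})
      atTop (nhds 1) := by
    intro k
    exact prob_fixed Ω hbdd hopen hconn P hsupp hpos (by positivity)
  have hNex : ∀ k : ℕ, ∃ N : ℕ, ∀ n ≥ N,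
      1 - 1 / ((k : ℝ≥0∞) + 1) ≤ (Measure.pi fun _ : Fin n => P)
        {x : Fin n → EuclideanSpace ℝ (Fin p) |
          ∀ s : ℝ, 1 / ((k : ℝ) + 1) ≤ s → IsTrilateration p (geomGraph x s)} := by
    intro k
    have hlt : 1 - 1 / ((k : ℝ≥0∞) + 1) < 1 := by
      refine ENNReal.sub_lt_self ENNReal.one_ne_top one_ne_zero ?_
      simp [ENNReal.div_eq_top]
    have := (F k).eventually_const_le hlt
    rw [eventually_atTop] at this
    obtain ⟨N, hNn⟩ := this
    exact ⟨N, hNn⟩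
  choose N hNs using hNex
  set M : ℕ → ℕ := fun k => Nat.rec (N 0) (fun k ih => max (N (k + 1)) (ih + 1)) k with hM
  have hMN : ∀ k, N k ≤ M k := by
    intro k
    cases k with
    | zero => exact le_rfl
    | succ k => exact le_max_left _ _
  have hMmono : ∀ k, M k + 1 ≤ M (k + 1) := fun k => le_max_right _ _
  have hMk : ∀ k, k ≤ M k := by
    intro k
    induction k with
    | zero => exact Nat.zero_le _
    | succ k ih => exact le_trans (by omega) (hMmono k)
  set T : ℕ → ℕ := fun n => Nat.findGreatest (fun k => M k ≤ n) n with hT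
  have hTge : ∀ k n, M k ≤ n → k ≤ T n := by
    intro k n hkn
    exact Nat.le_findGreatest (le_trans (hMk k) hkn) hkn
  have hTat : Tendsto T atTop atTop :=
    tendsto_atTop_atTop.2 fun B => ⟨M B, fun n hn => hTge B n hn⟩
  refine ⟨fun n => 1 / ((T n : ℝ) + 1), ?_, ?_⟩
  · exact tendsto_one_div_add_atTop_nhds_zero_nat.comp hTat
  · rw [ENNReal.tendsto_nhds ENNReal.one_ne_top]
    intro ε hε
    obtain ⟨k₁, hk₁⟩ := ENNReal.exists_inv_nat_lt hε.ne'
    have hk₁' : 1 / ((k₁ : ℝ≥0∞) + 1) ≤ ε := by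
      rw [one_div]
      refine le_trans ?_ hk₁.le
      exact ENNReal.inv_le_inv' (by simp)
    rw [eventually_atTop]
    refine ⟨max (M 0) (M k₁), fun n hn => ?_⟩
    have hn0 : M 0 ≤ n := le_trans (le_max_left _ _) hn
    have hnk₁ : M k₁ ≤ n := le_trans (le_max_right _ _) hn
    have hTn : M (T n) ≤ n :=
      Nat.findGreatest_spec (P := fun k => M k ≤ n) (Nat.zero_le n) hn0
    have hTnk : k₁ ≤ T n := hTge k₁ n hnk₁
    have hlow := hNs (T n) n (le_trans (hMN (T n)) hTn)
    constructor
    · refine le_trans ?_ hlow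
      refine tsub_le_tsub_left ?_ 1
      refine le_trans ?_ hk₁'
      rw [one_div, one_div]
      refine ENNReal.inv_le_inv' ?_
      have : (k₁ : ℝ≥0∞) ≤ (T n : ℝ≥0∞) := by exact_mod_cast hTnk
      exact add_le_add_left this 1
    · exact le_trans prob_le_one le_self_add
end

section
/- Let x_1,...,x_m ∈ R^p be a configuration whose vectors span R^p, written as the rows of the matrix Y ∈ R^{m×p}, and let x ∈ R^p. Define d_i = ||x - x_i|| and a_j = (1/m) Σ_{i=1}^m ||x_i - x_j||^2. If Σ_{i=1}^m x_i = 0 (centered landmarks), then the trilateration output y = (1/2) Y^† (a - d^{∘2}), where Y^† is the Moore–Penrose pseudo-inverse of Y, d^{∘2} = (d_1^2,...,d_m^2), and a = (a_1,...,a_m), satisfies y = x. -/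
open Matrix
open scoped RealInnerProductSpace

/-- Exactness of the trilateration method of de Silva--Tenenbaum in the noiseless
case: for centered landmarks `x_1, ..., x_m` spanning `ℝ^p` (rows of `Y`), exact
squared distances `d_i^2 = ‖z - x_i‖^2` and `a_j = (1/m) Σ_i ‖x_i - x_j‖^2`, the
output `y = ½ Y† (a - d^{∘2})` equals `z`.  Since `Y` has full column rank, its
Moore--Penrose pseudo-inverse is `Y† = (Yᵀ Y)⁻¹ Yᵀ`. -/
theorem trilateration_exact {m p : ℕ}
    (x : Fin m → EuclideanSpace ℝ (Fin p)) (z : EuclideanSpace ℝ (Fin p))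
    (hspan : Submodule.span ℝ (Set.range x) = ⊤)
    (hcenter : ∑ i, x i = 0) :
    let Y : Matrix (Fin m) (Fin p) ℝ := Matrix.of fun i k => x i k
    let Ydag : Matrix (Fin p) (Fin m) ℝ := (Yᵀ * Y)⁻¹ * Yᵀ
    let d2 : Fin m → ℝ := fun i => ‖z - x i‖ ^ 2
    let a : Fin m → ℝ := fun i => (1 / m : ℝ) * ∑ i', ‖x i' - x i‖ ^ 2
    ∀ j : Fin p, ((1 / 2 : ℝ) • Ydag.mulVec (a - d2)) j = z j := by
  intro Y Ydag d2 a j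
  -- degenerate case m = 0
  rcases Nat.eq_zero_or_pos m with hm | hm
  · subst hm
    have hsub : (⊥ : Submodule ℝ (EuclideanSpace ℝ (Fin p))) = ⊤ := by
      simpa [Set.range_eq_empty] using hspan
    have hz : z = 0 := by
      have : z ∈ (⊥ : Submodule ℝ (EuclideanSpace ℝ (Fin p))) := hsub ▸ Submodule.mem_top
      simpa using this
    simp [Ydag, Matrix.mulVec, dotProduct, hz]
  -- main case
  have hm' : (m : ℝ) ≠ 0 := Nat.cast_ne_zero.mpr hm.ne'
  set G : Matrix (Fin p) (Fin p) ℝ := Yᵀ * Y with hG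
  -- G is invertible
  have hGunit : IsUnit G := by
    rw [← Matrix.mulVec_injective_iff_isUnit]
    rw [Function.Injective]
    intro v w hvw
    -- reduce to kernel
    suffices h : ∀ u : Fin p → ℝ, G.mulVec u = 0 → u = 0 by
      have := h (v - w) (by rw [Matrix.mulVec_sub, hvw, sub_self])
      exact sub_eq_zero.mp this
    intro u hu
    have hYu : Y.mulVec u = 0 := by
      have h1 : u ⬝ᵥ G.mulVec u = 0 := by rw [hu]; simp
      have h2 : u ⬝ᵥ G.mulVec u = (Y.mulVec u) ⬝ᵥ (Y.mulVec u) := by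
        rw [hG, ← Matrix.mulVec_mulVec, Matrix.dotProduct_mulVec]
        congr 1
        ext i
        simp [Matrix.vecMul, Matrix.mulVec, dotProduct, mul_comm]
      have h3 : ∑ i, (Y.mulVec u i)^2 = 0 := by
        rw [← h1, h2]; simp [dotProduct, sq]
      funext i
      have := (Finset.sum_eq_zero_iff_of_nonneg (fun i _ => sq_nonneg (Y.mulVec u i))).mp h3 i (Finset.mem_univ i)
      exact pow_eq_zero_iff two_ne_zero |>.mp this
    -- orthogonality to all x i
    let uvec : EuclideanSpace ℝ (Fin p) := WithLp.toLp 2 u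
    have horth : ∀ i, ⟪x i, uvec⟫ = 0 := by
      intro i
      have := congrFun hYu i
      simpa [Y, Matrix.mulVec, dotProduct, PiLp.inner_apply, uvec, mul_comm] using this
    have : uvec = 0 := by
      have hmem : uvec ∈ (Submodule.span ℝ (Set.range x))ᗮ := by
        rw [Submodule.mem_orthogonal]
        intro y hy
        induction hy using Submodule.span_induction with
        | mem w hw => obtain ⟨i, rfl⟩ := hw; exact horth i
        | zero => simp
        | add w₁ w₂ _ _ h1 h2 => rw [inner_add_left, h1, h2, add_zero]
        | smul c w _ h1 => rw [inner_smul_left, h1, mul_zero]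
      rw [hspan, Submodule.top_orthogonal_eq_bot] at hmem
      simpa using hmem
    funext k
    simpa [uvec] using congrArg (fun v : EuclideanSpace ℝ (Fin p) => v k) this
  have hGinv : G⁻¹ * G = 1 := Matrix.nonsing_inv_mul G ((Matrix.isUnit_iff_isUnit_det G).mp hGunit)
  -- key formula for a - d2
  set c : ℝ := (1 / m : ℝ) * ∑ i', ‖x i'‖^2 - ‖z‖^2 with hc
  have hw : ∀ i, (a - d2) i = c + 2 * ⟪x i, z⟫ := by
    intro i
    have hd : d2 i = ‖z‖^2 - 2 * ⟪z, x i⟫ + ‖x i‖^2 := norm_sub_sq_real z (x i)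
    have ha : a i = (1 / m : ℝ) * ∑ i', ‖x i'‖^2 + ‖x i‖^2 := by
      have hsum : ∀ i', ‖x i' - x i‖^2 = ‖x i'‖^2 - 2 * ⟪x i', x i⟫ + ‖x i‖^2 :=
        fun i' => norm_sub_sq_real (x i') (x i)
      have hstep : ∑ i', ‖x i' - x i‖^2
          = ∑ i', ‖x i'‖^2 - 2 * ⟪∑ i', x i', x i⟫ + m * ‖x i‖^2 := by
        rw [sum_inner]
        simp only [hsum, Finset.sum_add_distrib, Finset.sum_sub_distrib,
          Finset.sum_const, Finset.card_univ, Fintype.card_fin, nsmul_eq_mul]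
        rw [Finset.mul_sum]
      rw [show a i = (1 / m : ℝ) * ∑ i', ‖x i' - x i‖^2 from rfl, hstep, hcenter]
      simp
      field_simp
    have : (a - d2) i = a i - d2 i := rfl
    rw [this, ha, hd, hc, real_inner_comm z (x i)]
    ring
  -- now compute
  have hAD : (a - d2) = fun i => c + 2 * ⟪x i, z⟫ := funext hw
  have hYt : Yᵀ.mulVec (a - d2) = G.mulVec ((2 : ℝ) • fun k => z k) := by
    funext k
    have h0 : ∑ i, x i k = 0 := by
      have h := congrArg (fun v : EuclideanSpace ℝ (Fin p) => v k) hcenter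
      simpa using h
    have hL : Yᵀ.mulVec (a - d2) k = ∑ i, x i k * (c + 2 * ∑ k', x i k' * z k') := by
      rw [hAD]
      simp [Matrix.mulVec, dotProduct, PiLp.inner_apply, Y, RCLike.inner_apply]
      simp_rw [mul_comm (z.ofLp _)]
    have hR : (G.mulVec ((2 : ℝ) • fun k => z k)) k
        = ∑ k', (∑ i, x i k * x i k') * (2 * z k') := by
      simp [Matrix.mulVec, dotProduct, hG, Matrix.mul_apply, Y, Finset.sum_mul, mul_comm]
    rw [hL, hR]
    calc ∑ i, x i k * (c + 2 * ∑ k', x i k' * z k')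
        = (∑ i, x i k) * c + ∑ i, ∑ k', x i k * (2 * (x i k' * z k')) := by
          rw [Finset.sum_mul, ← Finset.sum_add_distrib]
          refine Finset.sum_congr rfl fun i _ => ?_
          rw [mul_add]
          congr 1
          rw [Finset.mul_sum, Finset.mul_sum]
      _ = ∑ k', (∑ i, x i k * x i k') * (2 * z k') := by
          rw [h0, zero_mul, zero_add, Finset.sum_comm]
          refine Finset.sum_congr rfl fun k' _ => ?_
          rw [Finset.sum_mul]
          exact Finset.sum_congr rfl fun i _ => by ring
  have hfinal : Ydag.mulVec (a - d2) = (2 : ℝ) • fun k => z k := by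
    show (G⁻¹ * Yᵀ).mulVec (a - d2) = _
    rw [← Matrix.mulVec_mulVec, hYt, Matrix.mulVec_mulVec, hGinv, Matrix.one_mulVec]
  rw [Pi.smul_apply, hfinal]
  simp
end

section
/- For any symmetric matrix of dissimilarities (d_{ij})_{1<=i,j<=n} with d_{ii} = 0 and d_{ij} = d_{ji} >= 0, there exists a constant c >= 0 such that the dissimilarities e_{ij} = d_{ij} + c for i ≠ j (and e_{ii} = 0) are Euclidean in dimension n-1: there exist points y_1,...,y_n ∈ R^{n-1} with ||y_i - y_j|| = e_{ij} for all i, j. -/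
open Finset in
lemma quad_bound {m : ℕ} (R : Matrix (Fin m) (Fin m) ℝ) (K : ℝ) (hK0 : 0 ≤ K)
    (hK : ∀ k l, |R k l| ≤ K) (x : Fin m → ℝ) :
    |∑ k, ∑ l, x k * R k l * x l| ≤ K * m * ∑ k, x k ^ 2 := by
  calc |∑ k, ∑ l, x k * R k l * x l| ≤ ∑ k, ∑ l, |x k * R k l * x l| := by
        refine (abs_sum_le_sum_abs _ _).trans ?_
        exact Finset.sum_le_sum fun k _ => abs_sum_le_sum_abs _ _
    _ ≤ ∑ k, ∑ l, K * (|x k| * |x l|) := by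
        refine Finset.sum_le_sum fun k _ => Finset.sum_le_sum fun l _ => ?_
        rw [abs_mul, abs_mul]
        have := hK k l
        have h1 : (0:ℝ) ≤ |x k| := abs_nonneg _
        have h2 : (0:ℝ) ≤ |x l| := abs_nonneg _
        nlinarith [mul_le_mul_of_nonneg_left this (mul_nonneg h1 h2)]
    _ = K * (∑ k, |x k|) ^ 2 := by
        simp_rw [← Finset.mul_sum, ← Finset.sum_mul]
        ring
    _ ≤ K * (m * ∑ k, |x k| ^ 2) := by
        refine mul_le_mul_of_nonneg_left ?_ hK0
        simpa using sq_sum_le_card_mul_sum_sq (s := Finset.univ) (f := fun k => |x k|)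
    _ = K * m * ∑ k, x k ^ 2 := by simp_rw [sq_abs]; ring

/-- Torgerson's additive constant result: for any symmetric hollow nonnegative
dissimilarities `(d_{ij})` on `n` items, there is a constant `c ≥ 0` such that the
dissimilarities `d_{ij} + c` (for `i ≠ j`) are realized exactly by a configuration
in `ℝ^{n-1}`. -/
theorem additive_constant_euclidean {n : ℕ} (d : Fin n → Fin n → ℝ)
    (hsymm : ∀ i j, d i j = d j i) (hzero : ∀ i, d i i = 0)
    (hnonneg : ∀ i j, 0 ≤ d i j) :
    ∃ c : ℝ, 0 ≤ c ∧ ∃ y : Fin n → EuclideanSpace ℝ (Fin (n - 1)),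
      ∀ i j, i ≠ j → dist (y i) (y j) = d i j + c := by
  obtain _ | m := n
  · exact ⟨0, le_refl 0, fun i => i.elim0, fun i => i.elim0⟩
  -- a bound on the entries
  obtain ⟨M, hM1, hdM⟩ : ∃ M : ℝ, 1 ≤ M ∧ ∀ i j, d i j ≤ M := by
    refine ⟨1 + ∑ i, ∑ j, d i j, ?_, ?_⟩
    · have : (0:ℝ) ≤ ∑ i, ∑ j, d i j :=
        Finset.sum_nonneg fun i _ => Finset.sum_nonneg fun j _ => hnonneg i j
      linarith
    · intro i j
      have h1 : d i j ≤ ∑ j', d i j' :=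
        Finset.single_le_sum (fun j' _ => hnonneg i j') (Finset.mem_univ j)
      have h2 : ∑ j', d i j' ≤ ∑ i', ∑ j', d i' j' :=
        Finset.single_le_sum (fun i' _ => Finset.sum_nonneg fun j' _ => hnonneg i' j')
          (Finset.mem_univ i)
      linarith
  have hM0 : (0:ℝ) ≤ M := by linarith
  -- the additive constant
  obtain ⟨c, hc0, hkey⟩ :
      ∃ c : ℝ, 0 ≤ c ∧ (2 * M * c + 2 * M ^ 2) * (m:ℝ) ≤ c ^ 2 / 2 := by
    refine ⟨8 * M * ((m:ℝ) + 1), ?_, ?_⟩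
    · have hm0 : (0:ℝ) ≤ (m:ℝ) := Nat.cast_nonneg m
      nlinarith
    · have hm0 : (0:ℝ) ≤ (m:ℝ) := Nat.cast_nonneg m
      nlinarith [mul_nonneg (mul_nonneg (mul_nonneg hM0 hM0) hm0) hm0,
        mul_nonneg (mul_nonneg hM0 hM0) hm0, mul_nonneg hM0 hM0]
  refine ⟨c, hc0, ?_⟩
  -- the Gram matrix
  obtain ⟨G, hGdef⟩ : ∃ G : Matrix (Fin m) (Fin m) ℝ, G = fun k l =>
      if k = l then (d 0 k.succ + c) ^ 2
      else ((d 0 k.succ + c) ^ 2 + (d 0 l.succ + c) ^ 2 - (d k.succ l.succ + c) ^ 2) / 2 :=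
    ⟨_, rfl⟩
  have hGdiag : ∀ k, G k k = (d 0 k.succ + c) ^ 2 := by
    intro k; rw [hGdef]; simp
  have hGoff : ∀ k l, k ≠ l → G k l
      = ((d 0 k.succ + c) ^ 2 + (d 0 l.succ + c) ^ 2 - (d k.succ l.succ + c) ^ 2) / 2 := by
    intro k l h; rw [hGdef]; simp [h]
  obtain ⟨R, hRdef⟩ : ∃ R : Matrix (Fin m) (Fin m) ℝ, R = fun k l =>
      G k l - c ^ 2 / 2 - if k = l then c ^ 2 / 2 else 0 := ⟨_, rfl⟩
  have hRdiag : ∀ k, R k k = G k k - c ^ 2 / 2 - c ^ 2 / 2 := by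
    intro k; rw [hRdef]; simp
  have hRoff : ∀ k l, k ≠ l → R k l = G k l - c ^ 2 / 2 := by
    intro k l h; rw [hRdef]; simp [h]
  have hRbound : ∀ k l, |R k l| ≤ 2 * M * c + 2 * M ^ 2 := by
    intro k l
    have h1 := hnonneg 0 k.succ
    have h2 := hnonneg 0 l.succ
    have h3 := hnonneg k.succ l.succ
    have h4 := hdM 0 k.succ
    have h5 := hdM 0 l.succ
    have h6 := hdM k.succ l.succ
    rw [abs_le]
    by_cases h : k = l
    · subst h
      rw [hRdiag, hGdiag]
      constructor <;>
        nlinarith [mul_nonneg h1 hc0, mul_le_mul_of_nonneg_right h4 hc0,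
          mul_le_mul h4 h4 h1 (le_trans h1 h4)]
    · rw [hRoff k l h, hGoff k l h]
      constructor <;>
        nlinarith [mul_nonneg h1 hc0, mul_nonneg h2 hc0, mul_nonneg h3 hc0,
          mul_le_mul_of_nonneg_right h4 hc0, mul_le_mul_of_nonneg_right h5 hc0,
          mul_le_mul_of_nonneg_right h6 hc0,
          mul_le_mul h4 h4 h1 (le_trans h1 h4), mul_le_mul h5 h5 h2 (le_trans h2 h5),
          mul_le_mul h6 h6 h3 (le_trans h3 h6)]
  have hK0 : (0:ℝ) ≤ 2 * M * c + 2 * M ^ 2 := by nlinarith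
  have hGsym : G.IsHermitian := by
    ext k l
    simp only [Matrix.conjTranspose_apply, star_trivial]
    by_cases h : k = l
    · rw [h]
    · rw [hGoff l k (fun hh => h hh.symm), hGoff k l h, hsymm l.succ k.succ]
      ring
  have hGpsd : G.PosSemidef := by
    refine Matrix.posSemidef_iff_dotProduct_mulVec.mpr ⟨hGsym, ?_⟩
    intro x
    have hquad : dotProduct (star x) (G.mulVec x)
        = ∑ k, ∑ l, x k * G k l * x l := by
      simp only [dotProduct, Matrix.mulVec, dotProduct, star_trivial,
        Pi.star_apply, Finset.mul_sum]
      refine Finset.sum_congr rfl fun k _ => Finset.sum_congr rfl fun l _ => by ring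
    rw [hquad]
    have hsplit : ∑ k, ∑ l, x k * G k l * x l
        = c ^ 2 / 2 * (∑ k, x k) ^ 2 + c ^ 2 / 2 * (∑ k, x k ^ 2)
          + ∑ k, ∑ l, x k * R k l * x l := by
      have step : ∀ k l : Fin m, x k * G k l * x l
          = x k * (c ^ 2 / 2) * x l + (x k * if k = l then c ^ 2 / 2 else 0) * x l
            + x k * R k l * x l := by
        intro k l
        rw [hRdef]
        ring
      have t1 : ∑ k, ∑ l, x k * (c ^ 2 / 2) * x l = c ^ 2 / 2 * (∑ k, x k) ^ 2 := by
        simp_rw [← Finset.mul_sum, ← Finset.sum_mul]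
        ring
      have t2 : ∑ k, ∑ l, (x k * if k = l then c ^ 2 / 2 else 0) * x l
          = c ^ 2 / 2 * ∑ k, x k ^ 2 := by
        have t2' : ∀ k : Fin m, ∑ l, (x k * if k = l then c ^ 2 / 2 else 0) * x l
            = c ^ 2 / 2 * x k ^ 2 := by
          intro k
          rw [Finset.sum_eq_single k]
          · rw [if_pos rfl]; ring
          · intro l _ hl
            rw [if_neg fun h => hl h.symm, mul_zero, zero_mul]
          · intro h; exact absurd (Finset.mem_univ k) h
        rw [Finset.mul_sum]
        exact Finset.sum_congr rfl fun k _ => t2' k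
      simp only [step, Finset.sum_add_distrib]
      rw [t1, t2]
    rw [hsplit]
    have hb := quad_bound R (2 * M * c + 2 * M ^ 2) hK0 hRbound x
    have hsum2 : (0:ℝ) ≤ ∑ k, x k ^ 2 := Finset.sum_nonneg fun k _ => sq_nonneg _
    have hsum1 : (0:ℝ) ≤ (∑ k, x k) ^ 2 := sq_nonneg _
    have hS : -(c ^ 2 / 2 * ∑ k, x k ^ 2) ≤ ∑ k, ∑ l, x k * R k l * x l := by
      have h1 : -((2 * M * c + 2 * M ^ 2) * m * ∑ k, x k ^ 2)
          ≤ ∑ k, ∑ l, x k * R k l * x l := by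
        have := neg_abs_le (∑ k, ∑ l, x k * R k l * x l)
        linarith
      have h2 : (2 * M * c + 2 * M ^ 2) * m * ∑ k, x k ^ 2
          ≤ c ^ 2 / 2 * ∑ k, x k ^ 2 :=
        mul_le_mul_of_nonneg_right hkey hsum2
      linarith
    have hT1 : 0 ≤ c ^ 2 / 2 * (∑ k, x k) ^ 2 := mul_nonneg (by positivity) hsum1
    linarith
  obtain ⟨B, hB⟩ : ∃ B : Matrix (Fin m) (Fin m) ℝ, G = B.conjTranspose * B := by
    open MatrixOrder in
    obtain ⟨X, hX, -, hXX⟩ := CFC.exists_sqrt_of_isSelfAdjoint_of_quasispectrumRestricts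
      hGsym.isSelfAdjoint (QuasispectrumRestricts.nnreal_of_nonneg hGpsd.nonneg)
    exact ⟨X, by rw [← Matrix.star_eq_conjTranspose, hX.star_eq, hXX]⟩
  have hGram : ∀ k l, G k l = ∑ r, B r k * B r l := by
    intro k l
    rw [hB]
    simp [Matrix.mul_apply, Matrix.conjTranspose_apply]
  -- the configuration
  have hpt : ∃ pt : Fin m → EuclideanSpace ℝ (Fin m), ∀ k r, pt k r = B r k :=
    ⟨fun k => (EuclideanSpace.equiv (Fin m) ℝ).symm (fun r => B r k), fun k r => rfl⟩
  obtain ⟨pt, hpt⟩ := hpt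
  refine ⟨fun i => Fin.cases (0 : EuclideanSpace ℝ (Fin m)) pt i, ?_⟩
  have hdistsq : ∀ p q : EuclideanSpace ℝ (Fin m),
      dist p q = Real.sqrt (∑ r, (p r - q r) ^ 2) := by
    intro p q
    rw [EuclideanSpace.dist_eq]
    congr 1
    exact Finset.sum_congr rfl fun r _ => by rw [Real.dist_eq, sq_abs]
  have hmain : ∀ k l : Fin m, k ≠ l →
      dist (pt k) (pt l) = d k.succ l.succ + c := by
    intro k l hkl
    rw [hdistsq]
    simp only [hpt]
    have hexp : ∑ r, (B r k - B r l) ^ 2 = G k k + G l l - 2 * G k l := by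
      rw [hGram k k, hGram l l, hGram k l, Finset.mul_sum, ← Finset.sum_add_distrib,
        ← Finset.sum_sub_distrib]
      exact Finset.sum_congr rfl fun r _ => by ring
    rw [hexp]
    have hGval : G k k + G l l - 2 * G k l = (d k.succ l.succ + c) ^ 2 := by
      rw [hGdiag, hGdiag, hGoff k l hkl]
      ring
    rw [hGval, Real.sqrt_sq (by have := hnonneg k.succ l.succ; linarith)]
  have hzerodist : ∀ l : Fin m,
      dist (0 : EuclideanSpace ℝ (Fin m)) (pt l) = d 0 l.succ + c := by
    intro l
    rw [hdistsq]
    simp only [hpt]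
    have hexp : ∑ r, ((0 : EuclideanSpace ℝ (Fin m)) r - B r l) ^ 2 = G l l := by
      rw [hGram l l]
      refine Finset.sum_congr rfl fun r _ => ?_
      have h0 : (0 : EuclideanSpace ℝ (Fin m)) r = 0 := rfl
      rw [h0]
      ring
    rw [hexp, hGdiag, Real.sqrt_sq (by have := hnonneg 0 l.succ; linarith)]
  intro i j hij
  rcases Fin.eq_zero_or_eq_succ i with rfl | ⟨k, rfl⟩ <;>
    rcases Fin.eq_zero_or_eq_succ j with rfl | ⟨l, rfl⟩
  · exact absurd rfl hij
  · simp only [Fin.cases_zero, Fin.cases_succ]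
    exact hzerodist l
  · simp only [Fin.cases_zero, Fin.cases_succ]
    rw [dist_comm, hzerodist k, hsymm]
  · simp only [Fin.cases_succ]
    exact hmain k l (fun h => hij (by rw [h]))
end
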